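/- Let n ≥ 4 and let λ₁ > λ₂ > 0 be real numbers with λ₃ = 0 (the planar asymmetric top case). Then a matrix K in SO(n−1) satisfies ∃ Q ∈ SO(3) with Q Λ Kᵀ = Λ if and only if K is block diagonal of the form K = diag(A, B), where A is a 2 × 2 diagonal matrix with diagonal entries ±1 occupying the upper-left 2 × 2 block, B is an (n−3) × (n−3) real orthogonal matrix occupying the lower-right block, det A · det B = 1, and all off-diagonal blocks are zero. -/

import Mathlib

/-- The `3 × (n-1)` matrix `Λ` with `Λ₁₁ = λ₁`, `Λ₂₂ = λ₂`, `Λ₃₃ = λ₃` and all other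
entries zero. -/
def Lam (n : ℕ) (l1 l2 l3 : ℝ) : Matrix (Fin 3) (Fin (n - 1)) ℝ :=
  Matrix.of fun i j => if (j : ℕ) = (i : ℕ) then ![l1, l2, l3] i else 0

/-- The `n × n` block diagonal matrix `diag(A, B)` built from an `a × a` block `A` and a
`b × b` block `B`, where `a + b = n`. -/
def embedBlocks {a b n : ℕ} (h : a + b = n) (A : Matrix (Fin a) (Fin a) ℝ)
    (B : Matrix (Fin b) (Fin b) ℝ) : Matrix (Fin n) (Fin n) ℝ :=
  Matrix.reindex (finSumFinEquiv.trans (finCongr h)) (finSumFinEquiv.trans (finCongr h))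
    (Matrix.fromBlocks A 0 0 B)

namespace StmtAux

def eB {a b n : ℕ} (h : a + b = n) : Fin a ⊕ Fin b ≃ Fin n :=
  finSumFinEquiv.trans (finCongr h)

variable {a b n : ℕ} (h : a + b = n)

lemma eB_inl_val (i : Fin a) : ((eB h (Sum.inl i)) : ℕ) = (i : ℕ) := by
  simp [eB]

lemma eB_inr_val (j : Fin b) : ((eB h (Sum.inr j)) : ℕ) = a + (j : ℕ) := by
  simp [eB]

lemma embed_apply (A : Matrix (Fin a) (Fin a) ℝ) (B : Matrix (Fin b) (Fin b) ℝ)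
    (x y : Fin a ⊕ Fin b) :
    embedBlocks h A B (eB h x) (eB h y) = Matrix.fromBlocks A 0 0 B x y := by
  simp [embedBlocks, eB, Matrix.reindex_apply]

lemma eB_surj (i : Fin n) : ∃ x, i = eB h x := ⟨(eB h).symm i, ((eB h).apply_symm_apply i).symm⟩

lemma embed_mul (A A' : Matrix (Fin a) (Fin a) ℝ) (B B' : Matrix (Fin b) (Fin b) ℝ) :
    embedBlocks h A B * embedBlocks h A' B' = embedBlocks h (A * A') (B * B') := by
  simp only [embedBlocks, Matrix.reindex_apply]
  rw [Matrix.submatrix_mul_equiv, Matrix.fromBlocks_multiply]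
  simp

lemma embed_transpose (A : Matrix (Fin a) (Fin a) ℝ) (B : Matrix (Fin b) (Fin b) ℝ) :
    (embedBlocks h A B).transpose = embedBlocks h A.transpose B.transpose := by
  simp [embedBlocks, Matrix.reindex_apply, Matrix.transpose_submatrix,
    Matrix.fromBlocks_transpose]

lemma embed_one : embedBlocks h 1 1 = (1 : Matrix (Fin n) (Fin n) ℝ) := by
  simp only [embedBlocks, Matrix.fromBlocks_one, Matrix.reindex_apply, Matrix.submatrix_one_equiv]

lemma embed_det (A : Matrix (Fin a) (Fin a) ℝ) (B : Matrix (Fin b) (Fin b) ℝ) :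
    (embedBlocks h A B).det = A.det * B.det := by
  simp only [embedBlocks, Matrix.det_reindex_self, Matrix.det_fromBlocks_zero₂₁]

lemma embed_inj {A A' : Matrix (Fin a) (Fin a) ℝ} {B B' : Matrix (Fin b) (Fin b) ℝ}
    (hE : embedBlocks h A B = embedBlocks h A' B') : A = A' ∧ B = B' := by
  constructor
  · ext i j
    have := congrFun (congrFun hE (eB h (Sum.inl i))) (eB h (Sum.inl j))
    simpa [embed_apply] using this
  · ext i j
    have := congrFun (congrFun hE (eB h (Sum.inr i))) (eB h (Sum.inr j))
    simpa [embed_apply] using this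

end StmtAux

def LamM (m : ℕ) (l1 l2 : ℝ) : Matrix (Fin 3) (Fin (m + 3)) ℝ :=
  Matrix.of fun i j => if (j : ℕ) = (i : ℕ) then ![l1, l2, 0] i else 0

namespace StmtAux

variable {m : ℕ}

/-- the embedding of `Fin 3` into `Fin (m+3)` -/
def emb (m : ℕ) (i : Fin 3) : Fin (m + 3) := ⟨(i : ℕ), by omega⟩

lemma LamM_apply (l1 l2 : ℝ) (i : Fin 3) (j : Fin (m + 3)) :
    LamM m l1 l2 i j = if (j : ℕ) = (i : ℕ) then ![l1, l2, 0] i else 0 := rfl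

/-- entry formula for `L * Kᵀ` -/
lemma LK_entry {ι : Type*} (l1 l2 : ℝ) (K : Matrix ι (Fin (m + 3)) ℝ)
    (i : Fin 3) (j : ι) :
    (LamM m l1 l2 * K.transpose) i j = ![l1, l2, 0] i * K j (emb m i) := by
  rw [Matrix.mul_apply]
  rw [Finset.sum_eq_single (emb m i)]
  · simp [LamM_apply, emb]
  · intro k _ hk
    have : (k : ℕ) ≠ (i : ℕ) := fun hc => hk (Fin.ext (by simpa [emb] using hc))
    simp [LamM_apply, this]
  · simp

lemma LLT (l1 l2 : ℝ) :
    LamM m l1 l2 * (LamM m l1 l2).transpose = Matrix.diagonal ![l1^2, l2^2, 0] := by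
  ext i j
  rw [LK_entry]
  rcases eq_or_ne i j with rfl | hij
  · fin_cases i <;> simp [LamM_apply, emb] <;> ring
  · have : (emb m i : ℕ) ≠ (j : ℕ) := by
      simp only [emb]
      exact fun hc => hij (Fin.ext hc)
    simp [LamM_apply, Matrix.diagonal_apply_ne _ hij, this]

end StmtAux

set_option maxHeartbeats 2000000 in
open StmtAux in
theorem key (m : ℕ) (l1 l2 : ℝ) (h12 : l2 < l1) (h2 : 0 < l2)
    (K : Matrix (Fin (m + 3)) (Fin (m + 3)) ℝ)
    (hK : K.transpose * K = 1 ∧ K.det = 1) :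
    (∃ Q : Matrix (Fin 3) (Fin 3) ℝ,
        (Q.transpose * Q = 1 ∧ Q.det = 1) ∧
        Q * LamM m l1 l2 * K.transpose = LamM m l1 l2) ↔
      ∃ (A : Matrix (Fin 2) (Fin 2) ℝ) (B : Matrix (Fin (m + 1)) (Fin (m + 1)) ℝ),
        (∀ i j, i ≠ j → A i j = 0) ∧ (∀ i, A i i = 1 ∨ A i i = -1) ∧
        B.transpose * B = 1 ∧
        A.det * B.det = 1 ∧
        K = embedBlocks (by omega : 2 + (m + 1) = m + 3) A B := by
  have h23 : 2 + (m + 1) = m + 3 := by omega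
  have hl1 : (0:ℝ) < l1 := lt_trans h2 h12
  constructor
  · rintro ⟨Q, ⟨hQ1, hQd⟩, hQL⟩
    set L := LamM m l1 l2 with hL
    -- Q commutes with D
    have hQQT : Q * Q.transpose = 1 := mul_eq_one_comm.mp hQ1
    have hQDQ : Q * Matrix.diagonal ![l1^2, l2^2, 0] * Q.transpose
        = Matrix.diagonal ![l1^2, l2^2, 0] := by
      have h1 : (Q * L * K.transpose) * (Q * L * K.transpose).transpose = L * L.transpose := by
        rw [hQL]
      rw [Matrix.transpose_mul, Matrix.transpose_mul, Matrix.transpose_transpose] at h1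
      calc Q * Matrix.diagonal ![l1^2, l2^2, 0] * Q.transpose
          = Q * (L * L.transpose) * Q.transpose := by rw [LLT]
        _ = (Q * L * K.transpose) * (K * (L.transpose * Q.transpose)) := by
            rw [Matrix.mul_assoc (Q * L) K.transpose, ← Matrix.mul_assoc K.transpose K,
              hK.1, Matrix.one_mul, ← Matrix.mul_assoc, ← Matrix.mul_assoc, Matrix.mul_assoc Q L]
        _ = L * L.transpose := h1
        _ = Matrix.diagonal ![l1^2, l2^2, 0] := LLT l1 l2
    have hQD : Q * Matrix.diagonal ![l1^2, l2^2, 0]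
        = Matrix.diagonal ![l1^2, l2^2, 0] * Q := by
      calc Q * Matrix.diagonal ![l1^2, l2^2, 0]
          = Q * Matrix.diagonal ![l1^2, l2^2, 0] * (Q.transpose * Q) := by rw [hQ1, mul_one]
        _ = (Q * Matrix.diagonal ![l1^2, l2^2, 0] * Q.transpose) * Q := by
            rw [mul_assoc, mul_assoc, mul_assoc]
        _ = Matrix.diagonal ![l1^2, l2^2, 0] * Q := by rw [hQDQ]
    -- Q is diagonal
    have hQoff : ∀ i j : Fin 3, i ≠ j → Q i j = 0 := by
      intro i j hij
      have h1 := congrFun (congrFun hQD i) j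
      rw [Matrix.mul_diagonal, Matrix.diagonal_mul] at h1
      have hd : ![l1^2, l2^2, 0] j ≠ ![l1^2, l2^2, 0] i := by
        fin_cases i <;> fin_cases j <;> simp_all <;> nlinarith
      by_contra hne
      rw [mul_comm (![l1^2, l2^2, 0] i) (Q i j)] at h1
      exact hd (mul_left_cancel₀ hne h1)
    -- diagonal entries of Q square to 1
    have hqsq : ∀ i : Fin 3, Q i i * Q i i = 1 := by
      intro i
      have h1 := congrFun (congrFun hQ1 i) i
      rw [Matrix.mul_apply] at h1
      rw [Finset.sum_eq_single i] at h1
      · simpa [Matrix.one_apply_eq] using h1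
      · intro k _ hk
        simp [Matrix.transpose_apply, hQoff k i hk]
      · simp
    -- L * Kᵀ = Qᵀ * L
    have hLK : L * K.transpose = Q.transpose * L := by
      have h1 : Q.transpose * (Q * L * K.transpose) = Q.transpose * L := by rw [hQL]
      rwa [← Matrix.mul_assoc, ← Matrix.mul_assoc, hQ1, Matrix.one_mul] at h1
    -- column structure of K
    have hcol : ∀ (i : Fin 3) (j : Fin (m + 3)),
        ![l1, l2, 0] i * K j (emb m i) = Q i i * (if (j : ℕ) = (i : ℕ) then ![l1, l2, 0] i else 0) := by
      intro i j
      have h1 := congrFun (congrFun hLK i) j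
      rw [LK_entry] at h1
      rw [Matrix.mul_apply, Finset.sum_eq_single i] at h1
      · rw [h1]; rfl
      · intro k _ hk
        simp [Matrix.transpose_apply, hQoff k i hk, LamM_apply]
      · simp
    have hc0 : ∀ j : Fin (m + 3), K j (emb m 0) = if (j : ℕ) = 0 then Q 0 0 else 0 := by
      intro j
      have h1 := hcol 0 j
      simp only [Matrix.cons_val_zero, Fin.val_zero] at h1 ⊢
      rcases eq_or_ne (j : ℕ) 0 with hj | hj
      · rw [if_pos hj] at h1 ⊢
        rw [mul_comm (Q 0 0) l1] at h1
        exact mul_left_cancel₀ (ne_of_gt hl1) h1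
      · rw [if_neg hj] at h1 ⊢
        rw [mul_zero] at h1
        exact (mul_eq_zero.mp h1).resolve_left (ne_of_gt hl1)
    have hc1 : ∀ j : Fin (m + 3), K j (emb m 1) = if (j : ℕ) = 1 then Q 1 1 else 0 := by
      intro j
      have h1 := hcol 1 j
      simp only [Matrix.cons_val_one, Matrix.head_cons, Matrix.cons_val_zero, Fin.val_one] at h1 ⊢
      rcases eq_or_ne (j : ℕ) 1 with hj | hj
      · rw [if_pos hj] at h1 ⊢
        rw [mul_comm (Q 1 1) l2] at h1
        exact mul_left_cancel₀ (ne_of_gt h2) h1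
      · rw [if_neg hj] at h1 ⊢
        rw [mul_zero] at h1
        exact (mul_eq_zero.mp h1).resolve_left (ne_of_gt h2)
    -- row structure of K
    have hKKT : K * K.transpose = 1 := mul_eq_one_comm.mp hK.1
    have hrow : ∀ i : Fin 3, K (emb m i) (emb m i) * K (emb m i) (emb m i) = 1 →
        ∀ j : Fin (m + 3), j ≠ emb m i → K (emb m i) j = 0 := by
      intro i hdiag j hj
      have h1 := congrFun (congrFun hKKT (emb m i)) (emb m i)
      rw [Matrix.mul_apply, Matrix.one_apply_eq] at h1
      have hsplit := Finset.add_sum_erase Finset.univ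
        (fun j => K (emb m i) j * K (emb m i) j) (Finset.mem_univ (emb m i))
      simp only [Matrix.transpose_apply] at h1
      rw [h1] at hsplit
      have hzero : ∑ x ∈ Finset.univ.erase (emb m i),
          K (emb m i) x * K (emb m i) x = 0 := by linarith [hsplit, hdiag]
      have := (Finset.sum_eq_zero_iff_of_nonneg
        (fun x _ => mul_self_nonneg (K (emb m i) x))).mp hzero j
        (Finset.mem_erase.mpr ⟨hj, Finset.mem_univ j⟩)
      nlinarith [this]
    have hd0 : K (emb m 0) (emb m 0) = Q 0 0 := by
      have := hc0 (emb m 0); simpa [emb] using this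
    have hd1 : K (emb m 1) (emb m 1) = Q 1 1 := by
      have := hc1 (emb m 1); simpa [emb] using this
    have hrow0 : ∀ j : Fin (m + 3), j ≠ emb m 0 → K (emb m 0) j = 0 :=
      hrow 0 (by rw [hd0]; exact hqsq 0)
    have hrow1 : ∀ j : Fin (m + 3), j ≠ emb m 1 → K (emb m 1) j = 0 :=
      hrow 1 (by rw [hd1]; exact hqsq 1)
    -- construct the blocks
    set A : Matrix (Fin 2) (Fin 2) ℝ := !![Q 0 0, 0; 0, Q 1 1] with hA
    set B : Matrix (Fin (m + 1)) (Fin (m + 1)) ℝ :=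
      Matrix.of fun i j => K (eB h23 (Sum.inr i)) (eB h23 (Sum.inr j)) with hB
    have he0 : eB h23 (Sum.inl (0 : Fin 2)) = emb m 0 := by
      apply Fin.ext; rw [eB_inl_val]; rfl
    have he1 : eB h23 (Sum.inl (1 : Fin 2)) = emb m 1 := by
      apply Fin.ext; rw [eB_inl_val]; rfl
    have hKE : K = embedBlocks h23 A B := by
      ext i j
      obtain ⟨x, rfl⟩ := eB_surj h23 i
      obtain ⟨y, rfl⟩ := eB_surj h23 j
      rw [embed_apply]
      cases x with
      | inl a =>
        cases y with
        | inl b =>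
          fin_cases a <;> fin_cases b <;> simp only [Fin.zero_eta, Fin.mk_one]
          · rw [he0, hd0]; simp [hA]
          · rw [he0, he1, hc1 (emb m 0)]; simp [hA, emb]
          · rw [he1, he0, hc0 (emb m 1)]; simp [hA, emb]
          · rw [he1, hd1]; simp [hA]
        | inr b =>
          fin_cases a <;> simp only [Fin.zero_eta, Fin.mk_one]
          · rw [he0]
            rw [hrow0 _ (Fin.ne_of_val_ne (by rw [eB_inr_val]; simp [emb]))]
            simp
          · rw [he1]
            rw [hrow1 _ (Fin.ne_of_val_ne (by rw [eB_inr_val]; simp [emb]; omega))]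
            simp
      | inr a =>
        cases y with
        | inl b =>
          fin_cases b <;> simp only [Fin.zero_eta, Fin.mk_one]
          · rw [he0, hc0]
            rw [if_neg (by rw [eB_inr_val]; omega)]
            simp
          · rw [he1, hc1]
            rw [if_neg (by rw [eB_inr_val]; omega)]
            simp
        | inr b => simp [hB]
    refine ⟨A, B, ?_, ?_, ?_, ?_, hKE⟩
    · intro i j hij
      fin_cases i <;> fin_cases j
      · exact absurd rfl hij
      · simp [hA]
      · simp [hA]
      · exact absurd rfl hij
    · intro i
      fin_cases i
      · simpa [hA] using mul_self_eq_one_iff.mp (hqsq 0)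
      · simpa [hA] using mul_self_eq_one_iff.mp (hqsq 1)
    · have h5 := hK.1
      rw [hKE, embed_transpose, embed_mul] at h5
      exact (embed_inj h23 (h5.trans (embed_one h23).symm)).2
    · have h6 := hK.2
      rw [hKE, embed_det] at h6
      exact h6
  · rintro ⟨A, B, hAoff, hAdiag, hBo, hdet, rfl⟩
    have hq0 : A 0 0 * A 0 0 = 1 := by rcases hAdiag 0 with h | h <;> rw [h] <;> norm_num
    have hq1 : A 1 1 * A 1 1 = 1 := by rcases hAdiag 1 with h | h <;> rw [h] <;> norm_num
    have he0 : eB h23 (Sum.inl (0 : Fin 2)) = emb m 0 := by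
      apply Fin.ext; rw [eB_inl_val]; rfl
    have he1 : eB h23 (Sum.inl (1 : Fin 2)) = emb m 1 := by
      apply Fin.ext; rw [eB_inl_val]; rfl
    have hEe : embedBlocks (by omega : 2 + (m + 1) = m + 3) A B = embedBlocks h23 A B := rfl
    rw [hEe]
    set E := embedBlocks h23 A B with hE
    have hc0E : ∀ j : Fin (m + 3), E j (emb m 0) = if (j : ℕ) = 0 then A 0 0 else 0 := by
      intro j
      obtain ⟨x, rfl⟩ := eB_surj h23 j
      rw [hE, ← he0]
      cases x with
      | inl a =>
        rw [embed_apply]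
        fin_cases a <;> simp only [Fin.zero_eta, Fin.mk_one]
        · rw [if_pos (by rw [eB_inl_val]; rfl)]
          simp [Matrix.fromBlocks]
        · rw [if_neg (by rw [eB_inl_val]; simp)]
          simpa [Matrix.fromBlocks] using hAoff 1 0 (by simp)
      | inr b =>
        rw [embed_apply, if_neg (by rw [eB_inr_val]; omega)]
        simp [Matrix.fromBlocks]
    have hc1E : ∀ j : Fin (m + 3), E j (emb m 1) = if (j : ℕ) = 1 then A 1 1 else 0 := by
      intro j
      obtain ⟨x, rfl⟩ := eB_surj h23 j
      rw [hE, ← he1]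
      cases x with
      | inl a =>
        rw [embed_apply]
        fin_cases a <;> simp only [Fin.zero_eta, Fin.mk_one]
        · rw [if_neg (by rw [eB_inl_val]; simp)]
          simpa [Matrix.fromBlocks] using hAoff 0 1 (by simp)
        · rw [if_pos (by rw [eB_inl_val]; rfl)]
          simp [Matrix.fromBlocks]
      | inr b =>
        rw [embed_apply, if_neg (by rw [eB_inr_val]; omega)]
        simp [Matrix.fromBlocks]
    refine ⟨Matrix.diagonal ![A 0 0, A 1 1, A 0 0 * A 1 1], ⟨?_, ?_⟩, ?_⟩
    · rw [Matrix.diagonal_transpose, Matrix.diagonal_mul_diagonal]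
      ext i j
      rcases eq_or_ne i j with rfl | hij
      · rw [Matrix.diagonal_apply_eq, Matrix.one_apply_eq]
        fin_cases i <;> simp <;> nlinarith [hq0, hq1]
      · rw [Matrix.diagonal_apply_ne _ hij, Matrix.one_apply_ne hij]
    · rw [Matrix.det_diagonal, Fin.prod_univ_three]
      simp only [Matrix.cons_val_zero, Matrix.cons_val_one, Matrix.head_cons,
        Matrix.cons_val_two, Matrix.tail_cons]
      nlinarith [hq0, hq1]
    · ext i j
      rw [Matrix.mul_assoc, Matrix.diagonal_mul, LK_entry]
      fin_cases i <;>
        simp only [Fin.zero_eta, Fin.mk_one, Matrix.cons_val_zero, Matrix.cons_val_one,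
          Matrix.head_cons, Matrix.cons_val_two, Matrix.tail_cons]
      · rw [hc0E j, LamM_apply]
        simp only [Matrix.cons_val_zero, Fin.val_zero]
        rcases eq_or_ne (j : ℕ) 0 with hj | hj
        · rw [if_pos hj, if_pos hj]; nlinarith [hq0]
        · rw [if_neg hj, if_neg hj]; ring
      · rw [hc1E j, LamM_apply]
        simp only [Matrix.cons_val_one, Matrix.head_cons, Matrix.cons_val_zero, Fin.val_one]
        rcases eq_or_ne (j : ℕ) 1 with hj | hj
        · rw [if_pos hj, if_pos hj]; nlinarith [hq1]
        · rw [if_neg hj, if_neg hj]; ring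
      · rw [LamM_apply]
        simp

/-- Planar asymmetric top case: for `n ≥ 4`, `λ₁ > λ₂ > 0` and `λ₃ = 0`, a matrix
`K ∈ SO(n-1)` satisfies `∃ Q ∈ SO(3), Q Λ Kᵀ = Λ` iff `K = diag(A, B)` with `A` a `2 × 2`
diagonal matrix with entries `±1`, `B ∈ O(n-3)`, and `det A · det B = 1`. -/
theorem stmt_8 (n : ℕ) (hn : 4 ≤ n) (l1 l2 : ℝ)
    (h12 : l2 < l1) (h2 : 0 < l2)
    (K : Matrix (Fin (n - 1)) (Fin (n - 1)) ℝ)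
    (hK : K.transpose * K = 1 ∧ K.det = 1) :
    (∃ Q : Matrix (Fin 3) (Fin 3) ℝ,
        (Q.transpose * Q = 1 ∧ Q.det = 1) ∧
        Q * Lam n l1 l2 0 * K.transpose = Lam n l1 l2 0) ↔
      ∃ (A : Matrix (Fin 2) (Fin 2) ℝ) (B : Matrix (Fin (n - 3)) (Fin (n - 3)) ℝ),
        (∀ i j, i ≠ j → A i j = 0) ∧ (∀ i, A i i = 1 ∨ A i i = -1) ∧
        B.transpose * B = 1 ∧
        A.det * B.det = 1 ∧
        K = embedBlocks (by omega : 2 + (n - 3) = n - 1) A B := by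
  obtain ⟨m, rfl⟩ : ∃ m, n = m + 4 := ⟨n - 4, by omega⟩
  exact key m l1 l2 h12 h2 K hK
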